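/- Let α be an ordinal and let w ⊆ α be a finite set of non-limit ordinals (each member is 0 or a successor) with |w| = n ≥ 1. Then the restricted tree 𝒯_α ↾ w = {η ∈ 𝒯_α : min(dom(η)) ∈ w and η(β) = 0 for all β ∈ dom(η) \ w}, ordered by function extension ⊆, is order-isomorphic to the set of nonempty sequences of natural numbers of length at most n, ordered by initial-segment. -/

import Mathlib

universe u

/-- An element of the tree `𝒯_α`: a function whose domain is an end-segment
`[start, α)` of `α` with `start` zero or a successor, values in `ω`,
with finite support. We encode it as an `Option ℕ`-valued function on all
ordinals, which is `some _` exactly on the domain. -/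
structure TreeT (α : Ordinal.{u}) : Type (u + 1) where
  toFun : Ordinal.{u} → Option ℕ
  start : Ordinal.{u}
  start_nonlimit : start = 0 ∨ ∃ γ : Ordinal.{u}, start = Order.succ γ
  start_le : start ≤ α
  dom_iff : ∀ γ : Ordinal.{u}, (toFun γ).isSome ↔ (start ≤ γ ∧ γ < α)
  finite_support : {γ : Ordinal.{u} | ∃ n : ℕ, n ≠ 0 ∧ toFun γ = some n}.Finite

namespace TreeT

/-- The tree partial order `⊴`: extension of partial functions. -/
def Ext {α : Ordinal.{u}} (f g : TreeT α) : Prop :=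
  ∀ (γ : Ordinal.{u}) (n : ℕ), f.toFun γ = some n → g.toFun γ = some n

/-- The least ordinal `δ` (at least both starts) such that `f` and `g`
agree on `[δ, α)`. -/
noncomputable def meetStart {α : Ordinal.{u}} (f g : TreeT α) : Ordinal.{u} :=
  sInf {δ : Ordinal.{u} | f.start ≤ δ ∧ g.start ≤ δ ∧
    ∀ ξ : Ordinal.{u}, δ ≤ ξ → ξ < α → f.toFun ξ = g.toFun ξ}

/-- The lexicographic order on `𝒯_α`: `f <_lex g` iff `f ⊊ g`, or `f, g` are
`⊆`-incomparable, the least ordinal from which they agree onward is a successor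
`γ + 1`, and `f γ < g γ`. -/
noncomputable def Lex {α : Ordinal.{u}} (f g : TreeT α) : Prop :=
  (Ext f g ∧ f ≠ g) ∨
  (¬ Ext f g ∧ ¬ Ext g f ∧ ∃ (γ : Ordinal.{u}) (m n : ℕ),
    meetStart f g = Order.succ γ ∧ f.toFun γ = some m ∧ g.toFun γ = some n ∧ m < n)

end TreeT

noncomputable section
open Classical
namespace Stmt8

theorem treeT_ext {α : Ordinal.{0}} {f g : TreeT α} (h1 : f.toFun = g.toFun)
    (h2 : f.start = g.start) : f = g := by
  cases f; cases g; simp_all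

variable (α : Ordinal.{0}) (w : Finset Ordinal.{0})

abbrev Sub : Type 1 := {η : TreeT α // η.start ∈ w ∧
    ∀ (β : Ordinal.{0}) (m : ℕ), η.toFun β = some m → β ∉ w → m = 0}

def b : Fin w.card ≃o {x // x ∈ w} := w.orderIsoOfFin rfl

lemma b_le_b {i j : Fin w.card} :
    ((b w i : {x // x ∈ w}) : Ordinal) ≤ ((b w j : {x // x ∈ w}) : Ordinal) ↔ i.1 ≤ j.1 := by
  rw [Subtype.coe_le_coe, (b w).le_iff_le, Fin.le_def]

def kIdx (η : Sub α w) : Fin w.card := (b w).symm ⟨η.1.start, η.2.1⟩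

lemma b_kIdx (η : Sub α w) : ((b w (kIdx α w η) : {x // x ∈ w}) : Ordinal) = η.1.start := by
  simp [kIdx]

def toList (η : Sub α w) : List ℕ :=
  List.ofFn (fun i : Fin (w.card - (kIdx α w η).1) =>
    (η.1.toFun (b w ⟨w.card - 1 - i.1, by have := i.2; omega⟩)).getD 0)

lemma toList_length (η : Sub α w) : (toList α w η).length = w.card - (kIdx α w η).1 := by
  simp [toList]

lemma toList_get (η : Sub α w) (i : ℕ) (hi : i < w.card - (kIdx α w η).1) :
    (toList α w η)[i]'(by simpa [toList_length] using hi) =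
      (η.1.toFun (b w ⟨w.card - 1 - i, by omega⟩)).getD 0 := by
  simp [toList]

variable (hw : ∀ β ∈ w, β < α ∧ (β = 0 ∨ ∃ γ : Ordinal.{0}, β = Order.succ γ))

def fromTree (l : List ℕ) (h1 : l ≠ []) (h2 : l.length ≤ w.card) : TreeT α where
  toFun γ :=
    if ((b w ⟨w.card - l.length, by have := List.length_pos_iff.mpr h1; omega⟩ : {x // x ∈ w}) : Ordinal) ≤ γ ∧ γ < α
    then some (if hγ : γ ∈ w then l.getD (w.card - 1 - ((b w).symm ⟨γ, hγ⟩ : Fin w.card).1) 0 else 0)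
    else none
  start := (b w ⟨w.card - l.length, by have := List.length_pos_iff.mpr h1; omega⟩ : {x // x ∈ w})
  start_nonlimit := (hw _ (b w _).2).2
  start_le := le_of_lt (hw _ (b w _).2).1
  dom_iff := by
    intro γ
    by_cases h : ((b w ⟨w.card - l.length, by have := List.length_pos_iff.mpr h1; omega⟩ : {x // x ∈ w}) : Ordinal) ≤ γ ∧ γ < α <;>
      simp [h]
  finite_support := by
    apply Set.Finite.subset w.finite_toSet
    intro γ hγ
    obtain ⟨n, hn, hsome⟩ := hγ
    simp only [Finset.mem_coe]
    by_contra hγw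
    split at hsome <;> simp_all

lemma fromTree_start (l : List ℕ) (h1 : l ≠ []) (h2 : l.length ≤ w.card) :
    (fromTree α w hw l h1 h2).start
      = ((b w ⟨w.card - l.length, by have := List.length_pos_iff.mpr h1; omega⟩ : {x // x ∈ w}) : Ordinal) := rfl

lemma fromTree_mem (l : List ℕ) (h1 : l ≠ []) (h2 : l.length ≤ w.card) :
    (fromTree α w hw l h1 h2).start ∈ w := (b w _).2

lemma fromTree_vanish (l : List ℕ) (h1 : l ≠ []) (h2 : l.length ≤ w.card) :
    ∀ (β : Ordinal.{0}) (m : ℕ), (fromTree α w hw l h1 h2).toFun β = some m → β ∉ w → m = 0 := by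
  intro β m hsome hβ
  unfold fromTree at hsome
  simp only at hsome
  by_cases hc : ((b w ⟨w.card - l.length, by have := List.length_pos_iff.mpr h1; omega⟩ : {x // x ∈ w}) : Ordinal) ≤ β ∧ β < α
  · rw [if_pos hc, dif_neg hβ] at hsome
    exact (Option.some_injective _ hsome).symm
  · rw [if_neg hc] at hsome
    exact absurd hsome (by simp)

lemma fromTree_toFun_of_mem (l : List ℕ) (h1 : l ≠ []) (h2 : l.length ≤ w.card)
    (γ : Ordinal.{0}) (hγ : γ ∈ w)
    (hle : (fromTree α w hw l h1 h2).start ≤ γ) (hlt : γ < α) :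
    (fromTree α w hw l h1 h2).toFun γ
      = some (l.getD (w.card - 1 - ((b w).symm ⟨γ, hγ⟩ : Fin w.card).1) 0) := by
  unfold fromTree
  simp only
  rw [if_pos ⟨hle, hlt⟩, dif_pos hγ]

def subInv (l : {l : List ℕ // l ≠ [] ∧ l.length ≤ w.card}) : Sub α w :=
  ⟨fromTree α w hw l.1 l.2.1 l.2.2, fromTree_mem α w hw l.1 l.2.1 l.2.2,
    fromTree_vanish α w hw l.1 l.2.1 l.2.2⟩

lemma kIdx_subInv (l : {l : List ℕ // l ≠ [] ∧ l.length ≤ w.card}) :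
    (kIdx α w (subInv α w hw l)).1 = w.card - l.1.length := by
  have : kIdx α w (subInv α w hw l)
      = ⟨w.card - l.1.length, by have := List.length_pos_iff.mpr l.2.1; omega⟩ := by
    apply (b w).injective
    apply Subtype.ext
    rw [b_kIdx]
    rfl
  rw [this]

def subFun (η : Sub α w) : {l : List ℕ // l ≠ [] ∧ l.length ≤ w.card} :=
  ⟨toList α w η, by
    rw [← List.length_pos_iff, toList_length]
    have := (kIdx α w η).2; omega,
   by rw [toList_length]; omega⟩

lemma right_inv (l : {l : List ℕ // l ≠ [] ∧ l.length ≤ w.card}) :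
    subFun α w (subInv α w hw l) = l := by
  apply Subtype.ext
  have hm : 1 ≤ l.1.length := List.length_pos_iff.mpr l.2.1
  have hk := kIdx_subInv α w hw l
  apply List.ext_getElem
  · simp only [subFun, toList_length, hk]
    omega
  · intro i h1 h2
    have hi : i < w.card - (kIdx α w (subInv α w hw l)).1 := by
      simpa [subFun, toList_length] using h1
    have := toList_get α w (subInv α w hw l) i hi
    simp only [subFun]
    rw [this]
    -- evaluate fromTree at γ = b ⟨card - 1 - i⟩
    set j : Fin w.card := ⟨w.card - 1 - i, by omega⟩ with hj
    have hγw : ((b w j : {x // x ∈ w}) : Ordinal) ∈ w := (b w j).2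
    have hle : (fromTree α w hw l.1 l.2.1 l.2.2).start ≤ ((b w j : {x // x ∈ w}) : Ordinal) := by
      rw [fromTree_start]
      rw [b_le_b]
      simp only [hj]
      omega
    have hlt : ((b w j : {x // x ∈ w}) : Ordinal) < α := (hw _ hγw).1
    have heval := fromTree_toFun_of_mem α w hw l.1 l.2.1 l.2.2 _ hγw hle hlt
    have hsymm : ((b w).symm ⟨((b w j : {x // x ∈ w}) : Ordinal), hγw⟩ : Fin w.card) = j := by
      rw [show (⟨((b w j : {x // x ∈ w}) : Ordinal), hγw⟩ : {x // x ∈ w}) = b w j from Subtype.ext rfl]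
      exact (b w).symm_apply_apply j
    rw [hsymm] at heval
    have heval2 : (subInv α w hw l).1.toFun ((b w j : {x // x ∈ w}) : Ordinal)
        = some (l.1.getD (w.card - 1 - j.1) 0) := heval
    rw [heval2]
    simp only [Option.getD_some, hj]
    have hidx : w.card - 1 - (w.card - 1 - i) = i := by omega
    rw [hidx, List.getD_eq_getElem l.1 0 h2]

lemma left_inv (η : Sub α w) : subInv α w hw (subFun α w η) = η := by
  apply Subtype.ext
  have hk2 := (kIdx α w η).2
  have hlen : (toList α w η).length = w.card - (kIdx α w η).1 := toList_length α w η
  have hstart : (fromTree α w hw (toList α w η) (subFun α w η).2.1 (subFun α w η).2.2).start = η.1.start := by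
    rw [fromTree_start α w hw (toList α w η) (subFun α w η).2.1 (subFun α w η).2.2, ← b_kIdx α w η]
    congr 1
    congr 1
    apply Fin.ext
    simp only [hlen]
    omega
  apply treeT_ext _ hstart
  funext γ
  by_cases hdom : η.1.start ≤ γ ∧ γ < α
  · obtain ⟨hle, hlt⟩ := hdom
    have hsome : (η.1.toFun γ).isSome := (η.1.dom_iff γ).2 ⟨hle, hlt⟩
    obtain ⟨nn, hnn⟩ := Option.isSome_iff_exists.1 hsome
    rw [hnn]
    by_cases hγw : γ ∈ w
    · have heval := fromTree_toFun_of_mem α w hw (toList α w η)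
        (subFun α w η).2.1 (subFun α w η).2.2 γ hγw (by rw [hstart]; exact hle) hlt
      rw [heval]
      set j : Fin w.card := (b w).symm ⟨γ, hγw⟩ with hjdef
      have hbj : ((b w j : {x // x ∈ w}) : Ordinal) = γ := by
        simp [hjdef]
      have hkj : (kIdx α w η).1 ≤ j.1 := by
        rw [← b_le_b w, b_kIdx, hbj]; exact hle
      have hlt2 : w.card - 1 - j.1 < w.card - (kIdx α w η).1 := by
        have := j.2; omega
      have hgd : (toList α w η).getD (w.card - 1 - j.1) 0
          = (toList α w η)[w.card - 1 - j.1]'(by rw [hlen]; exact hlt2) :=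
        List.getD_eq_getElem _ 0 (by rw [hlen]; exact hlt2)
      rw [hgd, toList_get α w η _ hlt2]
      have hfin : (⟨w.card - 1 - (w.card - 1 - j.1), by omega⟩ : Fin w.card) = j := by
        apply Fin.ext
        have := j.2; simp only; omega
      rw [hfin, hbj, hnn]
      rfl
    · -- γ ∉ w : η value is 0, fromTree value is some 0
      have h0 : nn = 0 := η.2.2 γ nn hnn hγw
      unfold fromTree
      simp only
      rw [if_pos ⟨by exact hstart.trans_le hle, hlt⟩,
        dif_neg hγw, h0]
  · have h1 : η.1.toFun γ = none := by
      rw [← Option.not_isSome_iff_eq_none, η.1.dom_iff]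
      exact hdom
    have h2 : (fromTree α w hw (toList α w η) (subFun α w η).2.1 (subFun α w η).2.2).toFun γ = none := by
      rw [← Option.not_isSome_iff_eq_none, TreeT.dom_iff, hstart]
      exact hdom
    rw [h1, h2]


def eqv : Sub α w ≃ {l : List ℕ // l ≠ [] ∧ l.length ≤ w.card} where
  toFun := subFun α w
  invFun := subInv α w hw
  left_inv := left_inv α w hw
  right_inv := right_inv α w hw

lemma ext_iff_prefix (hw0 : ∀ β ∈ w, β < α ∧ (β = 0 ∨ ∃ γ : Ordinal.{0}, β = Order.succ γ))
    (f g : Sub α w) :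
    TreeT.Ext f.1 g.1 ↔ toList α w f <+: toList α w g := by
  constructor
  · intro h
    have hfs : f.1.start < α := (hw0 _ f.2.1).1
    have hfsome := (f.1.dom_iff f.1.start).2 ⟨le_refl _, hfs⟩
    obtain ⟨nn, hnn⟩ := Option.isSome_iff_exists.1 hfsome
    have hg := h _ _ hnn
    have hgs : g.1.start ≤ f.1.start := ((g.1.dom_iff _).1 (by rw [hg]; rfl)).1
    have hkk : (kIdx α w g).1 ≤ (kIdx α w f).1 := by
      rw [← b_le_b w, b_kIdx, b_kIdx]; exact hgs
    have hkf := (kIdx α w f).2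
    rw [List.prefix_iff_eq_take]
    apply List.ext_getElem
    · simp only [toList_length, List.length_take]
      omega
    · intro i h1 h2
      have hif : i < w.card - (kIdx α w f).1 := by simpa [toList_length] using h1
      have hig : i < w.card - (kIdx α w g).1 := by omega
      rw [List.getElem_take]
      rw [toList_get α w f i hif, toList_get α w g i hig]
      have hje : f.1.start ≤ ((b w ⟨w.card - 1 - i, by omega⟩ : {x // x ∈ w}) : Ordinal) := by
        rw [← b_kIdx α w f, b_le_b]
        simp only
        omega
      have hjlt : ((b w ⟨w.card - 1 - i, by omega⟩ : {x // x ∈ w}) : Ordinal) < α :=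
        (hw0 _ (b w _).2).1
      have hfsome2 := (f.1.dom_iff _).2 ⟨hje, hjlt⟩
      obtain ⟨m, hm⟩ := Option.isSome_iff_exists.1 hfsome2
      rw [hm, h _ _ hm]
  · intro h
    have hlen := h.length_le
    rw [toList_length, toList_length] at hlen
    have hkf := (kIdx α w f).2
    have hkg := (kIdx α w g).2
    have hkk : (kIdx α w g).1 ≤ (kIdx α w f).1 := by omega
    have hgs : g.1.start ≤ f.1.start := by
      rw [← b_kIdx α w f, ← b_kIdx α w g, b_le_b]; exact hkk
    intro γ nn hnn
    have hdom := (f.1.dom_iff γ).1 (by rw [hnn]; rfl)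
    have hgdom : (g.1.toFun γ).isSome := (g.1.dom_iff γ).2 ⟨le_trans hgs hdom.1, hdom.2⟩
    obtain ⟨mm, hmm⟩ := Option.isSome_iff_exists.1 hgdom
    by_cases hγw : γ ∈ w
    · set j : Fin w.card := (b w).symm ⟨γ, hγw⟩ with hjdef
      have hbj : ((b w j : {x // x ∈ w}) : Ordinal) = γ := by simp [hjdef]
      have hkj : (kIdx α w f).1 ≤ j.1 := by
        rw [← b_le_b w, b_kIdx, hbj]; exact hdom.1
      have hj2 := j.2
      have hif : w.card - 1 - j.1 < w.card - (kIdx α w f).1 := by omega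
      have hig : w.card - 1 - j.1 < w.card - (kIdx α w g).1 := by omega
      have heq : (toList α w f)[w.card - 1 - j.1]'(by rw [toList_length]; exact hif)
          = (toList α w g)[w.card - 1 - j.1]'(by rw [toList_length]; exact hig) :=
        h.getElem _
      rw [toList_get α w f _ hif, toList_get α w g _ hig] at heq
      have hfin : (⟨w.card - 1 - (w.card - 1 - j.1), by omega⟩ : Fin w.card) = j :=
        Fin.ext (by simp only; omega)
      rw [hfin, hbj, hnn, hmm] at heq
      simp only [Option.getD_some] at heq
      rw [hmm, heq]
    · have h0 : nn = 0 := f.2.2 γ nn hnn hγw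
      have h0' : mm = 0 := g.2.2 γ mm hmm hγw
      rw [hmm, h0, h0']

end Stmt8
end


/-- For a finite set `w` of non-limit ordinals below `α` with `|w| = n ≥ 1`, the
restricted tree `𝒯_α ↾ w` (elements whose domain starts in `w` and which vanish
off `w`), ordered by extension, is order-isomorphic to the set of nonempty
sequences of naturals of length at most `n`, ordered by initial segment. -/
theorem statement_8 (α : Ordinal.{0}) (w : Finset Ordinal.{0})
    (hw : ∀ β ∈ w, β < α ∧ (β = 0 ∨ ∃ γ : Ordinal.{0}, β = Order.succ γ))
    (hn : 1 ≤ w.card) :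
    ∃ e : {η : TreeT α // η.start ∈ w ∧
        ∀ (β : Ordinal.{0}) (m : ℕ), η.toFun β = some m → β ∉ w → m = 0} ≃
        {l : List ℕ // l ≠ [] ∧ l.length ≤ w.card},
      ∀ f g, TreeT.Ext f.1 g.1 ↔ (e f).1 <+: (e g).1 := by
  exact ⟨Stmt8.eqv α w hw, fun f g => Stmt8.ext_iff_prefix α w hw f g⟩
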